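/- Let a^P(u,v) = ∫_P ⟨K∇u,∇v⟩ be a symmetric coercive bilinear form on a finite-dimensional space V(P) containing P_k(P), let Π = Π^∇_k be a projection onto P_k(P) satisfying a^P(Πv, q) = a^P(v,q) for all q ∈ P_k(P), and let S^P be a symmetric bilinear form satisfying c_* a^P(v,v) ≤ S^P(v,v) ≤ c^* a^P(v,v) for all v ∈ V(P) with Πv = 0. Then the discrete form a_h^P(u,v) := a^P(Πu, Πv) + S^P((I−Π)u, (I−Π)v) satisfies: (i) k-consistency: a_h^P(v,q) = a^P(v,q) for all v ∈ V(P), q ∈ P_k(P); and (ii) stability: min{1,c_*} a^P(v,v) ≤ a_h^P(v,v) ≤ max{1,c^*} a^P(v,v) for all v ∈ V(P). -/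
import Mathlib


/-- The abstract VEM consistency–stability lemma. `V` is the (finite-dimensional)
local virtual element space `V(P) ⊇ P_k(P)`, `A = a^P` the exact symmetric
nonnegative bilinear form, `Pk` the polynomial subspace, `Pr = Π^∇_k` the
`A`-orthogonal projection onto `Pk`, and `S = S^P` a symmetric stabilizing form
equivalent to `A` on the kernel of `Π`. Then the discrete form
`a_h(u,v) = A(Pru,Πv) + S((I−Π)u,(I−Π)v)` is `k`-consistent and stable. -/
theorem vem_consistency_stability
    (V : Type*) [AddCommGroup V] [Module ℝ V] [FiniteDimensional ℝ V]
    (Pk : Submodule ℝ V)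
    (A S : V →ₗ[ℝ] V →ₗ[ℝ] ℝ)
    (hAsymm : ∀ u v, A u v = A v u) (hAnonneg : ∀ v, 0 ≤ A v v)
    (Pr : V →ₗ[ℝ] V) (hrange : ∀ v, Pr v ∈ Pk) (hproj : ∀ q ∈ Pk, Pr q = q)
    (horth : ∀ v, ∀ q ∈ Pk, A (Pr v) q = A v q)
    (hSsymm : ∀ u v, S u v = S v u)
    (cs cS : ℝ) (hcs : 0 < cs) (hc : cs ≤ cS)
    (hstab : ∀ v, Pr v = 0 → cs * A v v ≤ S v v ∧ S v v ≤ cS * A v v) :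
    -- k-consistency
    (∀ v, ∀ q ∈ Pk,
      A (Pr v) (Pr q) + S (v - Pr v) (q - Pr q) = A v q) ∧
    -- stability
    (∀ v, min 1 cs * A v v ≤ A (Pr v) (Pr v) + S (v - Pr v) (v - Pr v) ∧
      A (Pr v) (Pr v) + S (v - Pr v) (v - Pr v) ≤ max 1 cS * A v v) := by

  have hidem : ∀ v, Pr (v - Pr v) = 0 := by
    intro v
    rw [map_sub, hproj _ (hrange v), sub_self]
  have hdecomp : ∀ v, A v v = A (Pr v) (Pr v) + A (v - Pr v) (v - Pr v) := by
    intro v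
    have h1 : A (Pr v) (Pr v) = A v (Pr v) := horth v (Pr v) (hrange v)
    simp only [map_sub, LinearMap.sub_apply]
    have h2 : A (Pr v) v = A v (Pr v) := hAsymm _ _
    ring_nf
    linarith [h1, h2]
  constructor
  · intro v q hq
    have hq0 : q - Pr q = 0 := by rw [hproj q hq, sub_self]
    rw [hq0]
    simp only [map_zero]
    rw [add_zero, hproj q hq, horth v q hq]
  · intro v
    obtain ⟨hl, hr⟩ := hstab (v - Pr v) (hidem v)
    have hP := hAnonneg (Pr v)
    have hW := hAnonneg (v - Pr v)
    have hd := hdecomp v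
    constructor
    · have h1 : min 1 cs ≤ 1 := min_le_left _ _
      have h2 : min 1 cs ≤ cs := min_le_right _ _
      nlinarith
    · have h1 : (1:ℝ) ≤ max 1 cS := le_max_left _ _
      have h2 : cS ≤ max 1 cS := le_max_right _ _
      nlinarith
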